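/- Bi-orthogonality of complex Hermite functions: for a complex frequency E_θ = E e^{iθ} with E > 0 and |θ| < π/2 (so Re(E_θ) > 0), the functions f_m(q) = (√(E_θ)/(2^m m! √(2π)))^{1/2} e^{-E_θ q²/4} H_m(√(E_θ/2) q) satisfy ∫_ℝ f_n(q) f_m(q) dq = δ_{nm}. -/

import Mathlib

open MeasureTheory Complex

/-- The physicists' Hermite polynomials, characterized by the Rodrigues formula
`H_m(z) = (-1)^m e^{z²} (d/dz)^m e^{-z²}`, equivalently the recursion
`H_0 = 1`, `H_{m+1}(z) = 2 z H_m(z) - H_m'(z)`. -/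
noncomputable def hermiteH : ℕ → ℂ → ℂ
  | 0 => fun _ => 1
  | (m + 1) => fun z => 2 * z * hermiteH m z - deriv (hermiteH m) z

namespace HermiteAux

open Polynomial

noncomputable def hPoly : ℕ → Polynomial ℂ
  | 0 => 1
  | (m + 1) => 2 * Polynomial.X * hPoly m - Polynomial.derivative (hPoly m)

lemma hermiteH_eq (m : ℕ) : hermiteH m = fun z => (hPoly m).eval z := by
  induction m with
  | zero => funext z; simp [hermiteH, hPoly]
  | succ m ih =>
    funext z
    have hd : deriv (hermiteH m) z = (Polynomial.derivative (hPoly m)).eval z := by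
      rw [ih]; exact Polynomial.deriv _
    simp only [hermiteH, hPoly, ih, hd, Polynomial.eval_sub, Polynomial.eval_mul,
      Polynomial.eval_ofNat, Polynomial.eval_X]
    norm_num

lemma hPoly_derivative : ∀ m : ℕ, Polynomial.derivative (hPoly (m + 1)) = (2 * m + 2 : ℂ) • hPoly m
  | 0 => by
    simp only [hPoly]
    simp [Polynomial.smul_eq_C_mul]
    exact (map_ofNat Polynomial.C 2).symm
  | (k + 1) => by
    have ih := hPoly_derivative k
    have h1 : hPoly (k + 2) = 2 * Polynomial.X * hPoly (k + 1)
        - Polynomial.derivative (hPoly (k + 1)) := rfl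
    have h2 : hPoly (k + 1) = 2 * Polynomial.X * hPoly k
        - Polynomial.derivative (hPoly k) := rfl
    rw [Polynomial.smul_eq_C_mul] at ih ⊢
    rw [h1, Polynomial.derivative_sub, Polynomial.derivative_mul, ih]
    simp only [Polynomial.derivative_C_mul, Polynomial.derivative_X, Polynomial.derivative_mul,
      Polynomial.derivative_ofNat, mul_one, zero_mul, zero_add]
    have hC : Polynomial.C (2*(((k:ℕ)+1:ℕ):ℂ)+2) = Polynomial.C (2*(k:ℂ)+2) + Polynomial.C 2 := by
      push_cast
      rw [← map_add]
      congr 1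
      ring
    rw [hC, show Polynomial.C (2:ℂ) = (2:ℂ[X]) from map_ofNat _ 2]
    conv_lhs => rw [h2]
    conv_rhs => rw [h2]
    simp only [Polynomial.derivative_C, mul_zero, sub_zero, zero_mul]
    ring


lemma integrable_monomial_gaussian {c : ℂ} (hc : 0 < c.re) (k : ℕ) :
    Integrable (fun q : ℝ => (q : ℂ) ^ k * Complex.exp (-c * (q : ℂ) ^ 2)) := by
  have h1 : Integrable (fun x : ℝ => x ^ k * Real.exp (-c.re * x ^ 2)) := by
    have : (-1 : ℝ) < k := by exact_mod_cast neg_one_lt_zero.trans_le (Nat.cast_nonneg k)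
    simpa [Real.rpow_natCast] using integrable_rpow_mul_exp_neg_mul_sq hc this
  refine h1.norm.mono' ?_ ?_
  · exact ((continuous_ofReal.pow k).mul
      (Complex.continuous_exp.comp (by continuity))).aestronglyMeasurable
  · filter_upwards with q
    rw [norm_mul, norm_cexp_neg_mul_sq, norm_pow, Complex.norm_real, Real.norm_eq_abs,
      Real.norm_eq_abs, abs_mul, _root_.abs_pow]
    rw [abs_of_pos (Real.exp_pos _)]

lemma integrable_poly_gaussian {c : ℂ} (hc : 0 < c.re) (a : ℂ) (R : Polynomial ℂ) :
    Integrable (fun q : ℝ => R.eval (a * q) * Complex.exp (-c * (q : ℂ) ^ 2)) := by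
  have he : (fun q : ℝ => R.eval (a * q) * Complex.exp (-c * (q : ℂ) ^ 2))
      = fun q : ℝ => ∑ i ∈ Finset.range (R.natDegree + 1),
          (R.coeff i * a ^ i) * ((q : ℂ) ^ i * Complex.exp (-c * (q : ℂ) ^ 2)) := by
    funext q
    rw [Polynomial.eval_eq_sum_range, Finset.sum_mul]
    refine Finset.sum_congr rfl fun i _ => ?_
    ring
  rw [he]
  exact integrable_finset_sum _ fun i _ => (integrable_monomial_gaussian hc i).const_mul _

lemma integral_deriv_poly_gaussian {c : ℂ} (hc : 0 < c.re) {a : ℂ} (ha : a ^ 2 = c)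
    (R : Polynomial ℂ) :
    ∫ q : ℝ, (a * (Polynomial.derivative R).eval (a * q) - 2 * c * q * R.eval (a * q))
        * Complex.exp (-c * (q : ℂ) ^ 2) = 0 := by
  have hc0 : c ≠ 0 := fun h => by simp [h] at hc
  have ha0 : a ≠ 0 := fun h => hc0 (by rw [← ha, h]; ring)
  set f : ℝ → ℂ := fun q => R.eval (a * q) * Complex.exp (-c * (q : ℂ) ^ 2) with hf_def
  set f' : ℝ → ℂ := fun q => (a * (Polynomial.derivative R).eval (a * q)
      - 2 * c * q * R.eval (a * q)) * Complex.exp (-c * (q : ℂ) ^ 2) with hf'_def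
  have hderiv : ∀ x : ℝ, HasDerivAt f (f' x) x := by
    intro x
    have h1 : HasDerivAt (fun z : ℂ => R.eval (a * z))
        ((Polynomial.derivative R).eval (a * x) * a) (x : ℂ) := by
      have hg : HasDerivAt (fun z : ℂ => a * z) a (x : ℂ) := by
        simpa using (hasDerivAt_id (x : ℂ)).const_mul a
      exact (R.hasDerivAt (a * (x : ℂ))).comp (x : ℂ) hg
    have h2 : HasDerivAt (fun z : ℂ => Complex.exp (-c * z ^ 2))
        (Complex.exp (-c * (x : ℂ) ^ 2) * (-c * (2 * (x : ℂ) ^ 1))) (x : ℂ) :=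
      ((hasDerivAt_pow 2 (x : ℂ)).const_mul (-c)).cexp
    have h3 := (h1.mul h2).comp_ofReal
    convert h3 using 1
    · funext y; simp only [hf_def, Pi.mul_apply, neg_mul]
    simp only [hf'_def]
    ring
  have hf : Integrable f := integrable_poly_gaussian hc a R
  have hf' : Integrable f' := by
    have h4 := integrable_poly_gaussian hc a
      (Polynomial.C a * Polynomial.derivative R - Polynomial.C (2 * c / a) * (Polynomial.X * R))
    refine h4.congr (Filter.Eventually.of_forall fun q => ?_)
    simp only [Polynomial.eval_sub, Polynomial.eval_mul, Polynomial.eval_C, Polynomial.eval_X,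
      hf'_def]
    congr 1
    have h5 : 2 * c / a * (a * (q : ℂ) * R.eval (a * q)) = 2 * c * q * R.eval (a * q) := by
      field_simp
    rw [h5]
  simpa using integral_eq_zero_of_hasDerivAt_of_integrable hderiv hf' hf

lemma integrable_J {c : ℂ} (hc : 0 < c.re) (a : ℂ) (P Q : Polynomial ℂ) :
    Integrable (fun q : ℝ => P.eval (a * q) * Q.eval (a * q) * Complex.exp (-c * (q : ℂ) ^ 2)) := by
  simpa [Polynomial.eval_mul] using integrable_poly_gaussian hc a (P * Q)

lemma J_succ {c : ℂ} (hc : 0 < c.re) {a : ℂ} (ha : a ^ 2 = c) (n m : ℕ) :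
    ∫ q : ℝ, (hPoly (n + 1)).eval (a * q) * (hPoly m).eval (a * q) * Complex.exp (-c * (q : ℂ) ^ 2)
      = (2 * m : ℂ) * ∫ q : ℝ, (hPoly n).eval (a * q) * (hPoly (m - 1)).eval (a * q) *
          Complex.exp (-c * (q : ℂ) ^ 2) := by
  have hc0 : c ≠ 0 := fun h => by simp [h] at hc
  have ha0 : a ≠ 0 := fun h => hc0 (by rw [← ha, h]; ring)
  have hd : Polynomial.derivative (hPoly m) = (2 * m : ℂ) • hPoly (m - 1) := by
    cases m with
    | zero => simp [hPoly]
    | succ k =>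
      rw [hPoly_derivative k]
      congr 1
      push_cast
      ring
  have key := integral_deriv_poly_gaussian hc ha (hPoly n * hPoly m)
  have expand : (fun q : ℝ => (a * (Polynomial.derivative (hPoly n * hPoly m)).eval (a * q)
        - 2 * c * q * (hPoly n * hPoly m).eval (a * q)) * Complex.exp (-c * (q : ℂ) ^ 2))
      = fun q : ℝ =>
        a * ((2 * m : ℂ) * ((hPoly n).eval (a * q) * (hPoly (m - 1)).eval (a * q) *
            Complex.exp (-c * (q : ℂ) ^ 2)))
        - a * ((hPoly (n + 1)).eval (a * q) * (hPoly m).eval (a * q) *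
            Complex.exp (-c * (q : ℂ) ^ 2)) := by
    funext q
    rw [Polynomial.derivative_mul, hd]
    have hsucc : (hPoly (n + 1)).eval (a * (q : ℂ))
        = 2 * (a * q) * (hPoly n).eval (a * q) - (Polynomial.derivative (hPoly n)).eval (a * q) := by
      show ((2 * Polynomial.X * hPoly n - Polynomial.derivative (hPoly n)).eval (a * (q:ℂ))) = _
      simp [Polynomial.eval_mul]
    rw [hsucc]
    have h2c : 2 * c * (q : ℂ) = 2 * a * (a * q) * a / a := by field_simp; rw [← ha]; ring
    simp only [Polynomial.eval_add, Polynomial.eval_mul, Polynomial.eval_smul, smul_eq_mul]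
    rw [h2c]
    field_simp
    ring
  rw [expand] at key
  have h1 : Integrable (fun q : ℝ => a * ((2 * m : ℂ) * ((hPoly n).eval (a * q) *
      (hPoly (m - 1)).eval (a * q) * Complex.exp (-c * (q : ℂ) ^ 2)))) :=
    ((integrable_J hc a _ _).const_mul _).const_mul _
  have h2 : Integrable (fun q : ℝ => a * ((hPoly (n + 1)).eval (a * q) *
      (hPoly m).eval (a * q) * Complex.exp (-c * (q : ℂ) ^ 2))) :=
    (integrable_J hc a _ _).const_mul _
  rw [integral_sub h1 h2, sub_eq_zero, integral_const_mul, integral_const_mul,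
    integral_const_mul] at key
  have := mul_left_cancel₀ ha0 key
  rw [this]

lemma J_eq {c : ℂ} (hc : 0 < c.re) {a : ℂ} (ha : a ^ 2 = c) :
    ∀ n m : ℕ, (∫ q : ℝ, (hPoly n).eval (a * q) * (hPoly m).eval (a * q) *
        Complex.exp (-c * (q : ℂ) ^ 2))
      = if n = m then (2 ^ n * Nat.factorial n : ℂ) * ((Real.pi : ℂ) / c) ^ ((1 : ℂ) / 2)
        else 0 := by
  intro n
  induction n with
  | zero =>
    intro m
    cases m with
    | zero =>
      rw [if_pos rfl]
      simp only [hPoly, Polynomial.eval_one, one_mul, pow_zero, Nat.factorial_zero, Nat.cast_one]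
      simpa using integral_gaussian_complex hc
    | succ k =>
      rw [if_neg (by omega)]
      have sym : (∫ q : ℝ, (hPoly 0).eval (a * q) * (hPoly (k + 1)).eval (a * q) *
            Complex.exp (-c * (q : ℂ) ^ 2))
          = ∫ q : ℝ, (hPoly (k + 1)).eval (a * q) * (hPoly 0).eval (a * q) *
            Complex.exp (-c * (q : ℂ) ^ 2) := by
        congr 1
        funext q
        ring
      rw [sym, J_succ hc ha k 0]
      simp
  | succ n ih =>
    intro m
    cases m with
    | zero =>
      rw [J_succ hc ha n 0, if_neg (Nat.succ_ne_zero n)]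
      simp
    | succ k =>
      rw [J_succ hc ha n (k + 1)]
      simp only [Nat.add_sub_cancel]
      rw [ih k]
      by_cases h : n = k
      · subst h
        rw [if_pos rfl, if_pos rfl]
        rw [show ((n : ℕ) + 1).factorial = (n + 1) * n.factorial from Nat.factorial_succ n]
        push_cast
        ring
      · rw [if_neg h, if_neg (by omega), mul_zero]

lemma cpow_half_polar {r : ℝ} (hr : 0 < r) {φ : ℝ} (hφ : |φ| < Real.pi) :
    ((r : ℂ) * Complex.exp ((φ : ℂ) * I)) ^ ((1 : ℂ) / 2)
      = (Real.sqrt r : ℂ) * Complex.exp (((φ / 2 : ℝ) : ℂ) * I) := by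
  have hz : (r : ℂ) * Complex.exp ((φ : ℂ) * I) ≠ 0 :=
    mul_ne_zero (ofReal_ne_zero.2 hr.ne') (Complex.exp_ne_zero _)
  have habs : ‖(r : ℂ) * Complex.exp ((φ : ℂ) * I)‖ = r := by
    rw [norm_mul, Complex.norm_exp]
    simp [abs_of_pos hr]
  have harg : ((r : ℂ) * Complex.exp ((φ : ℂ) * I)).arg = φ := by
    rw [Complex.exp_mul_I, Complex.arg_real_mul _ hr]
    exact Complex.arg_cos_add_sin_mul_I ⟨by linarith [abs_lt.1 hφ |>.1], (abs_lt.1 hφ).2.le⟩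
  have hlog : Complex.log ((r : ℂ) * Complex.exp ((φ : ℂ) * I))
      = (Real.log r : ℂ) + (φ : ℂ) * I := by
    apply Complex.ext
    · simp [Complex.log_re, habs]
    · simp [Complex.log_im, harg]
  rw [Complex.cpow_def_of_ne_zero hz, hlog, add_mul, Complex.exp_add]
  congr 1
  · rw [show (Real.log r : ℂ) * (1 / 2) = ((Real.log r / 2 : ℝ) : ℂ) by push_cast; ring,
      ← Complex.ofReal_exp]
    norm_cast
    rw [Real.sqrt_eq_rpow, Real.rpow_def_of_pos hr]
    ring_nf
  · push_cast
    ring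

end HermiteAux

/-- The complex harmonic oscillator wavefunction of frequency `E_θ = E e^{iθ}`:
`f_m(q) = (√(E_θ)/(2^m m! √(2π)))^{1/2} e^{-E_θ q²/4} H_m(√(E_θ/2) q)`,
with principal branches of the square roots. -/
noncomputable def complexHermiteFun (E θ : ℝ) (m : ℕ) (q : ℝ) : ℂ :=
  ((((E : ℂ) * Complex.exp (Complex.I * θ)) ^ ((1 : ℂ) / 2)) /
      ((2 : ℂ) ^ m * (Nat.factorial m : ℂ) * (Real.sqrt (2 * Real.pi) : ℂ))) ^ ((1 : ℂ) / 2) *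
    Complex.exp (-((E : ℂ) * Complex.exp (Complex.I * θ)) * (q : ℂ) ^ 2 / 4) *
    hermiteH m ((((E : ℂ) * Complex.exp (Complex.I * θ)) / 2) ^ ((1 : ℂ) / 2) * q)

open HermiteAux in
/-- Bi-orthogonality of the complex Hermite functions: for `E > 0` and `|θ| < π/2`,
`∫_ℝ f_n(q) f_m(q) dq = δ_{nm}` (no complex conjugation). -/
theorem complexHermiteFun_biorthogonal (E θ : ℝ) (hE : 0 < E) (hθ : |θ| < Real.pi / 2)
    (n m : ℕ) :
    (∫ q : ℝ, complexHermiteFun E θ n q * complexHermiteFun E θ m q)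
      = if n = m then 1 else 0 := by
  classical
  have hπ := Real.pi_pos
  obtain ⟨hθ1, hθ2⟩ := abs_lt.1 hθ
  have hθπ : |θ| < Real.pi := hθ.trans (by linarith)
  set ε : ℂ := (E : ℂ) * Complex.exp (Complex.I * θ) with hε
  have hεpolar : ε = (E : ℂ) * Complex.exp ((θ : ℂ) * I) := by rw [hε, mul_comm Complex.I]
  have hεre : 0 < ε.re := by
    rw [hεpolar]
    have h1 : (Complex.exp ((θ : ℂ) * I)).re = Real.cos θ := Complex.exp_ofReal_mul_I_re θ
    have hcos : 0 < Real.cos θ := Real.cos_pos_of_mem_Ioo ⟨by linarith, hθ2⟩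
    simp only [Complex.mul_re, Complex.ofReal_re, Complex.ofReal_im, h1, zero_mul, sub_zero]
    positivity
  have hε0 : ε ≠ 0 := fun h => by simp [h] at hεre
  set c : ℂ := ε / 2 with hc_def
  have hcre : c.re = ε.re / 2 := by
    have h1 : c = ((1/2 : ℝ) : ℂ) * ε := by rw [hc_def]; push_cast; ring
    rw [h1, Complex.re_ofReal_mul]
    ring
  have hc : 0 < c.re := by rw [hcre]; positivity
  have hc0 : c ≠ 0 := fun h => by simp [h] at hc
  set a : ℂ := (ε / 2) ^ ((1 : ℂ) / 2) with ha_def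
  have ha : a ^ 2 = c := by
    rw [pow_two, ha_def, ← hc_def, ← Complex.cpow_add _ _ hc0]
    norm_num
  set w : ℂ := ε ^ ((1 : ℂ) / 2) with hw_def
  have hw0 : w ≠ 0 := by
    rw [hw_def, Ne, Complex.cpow_eq_zero_iff]
    simp [hε0]
  set s : ℂ := ((Real.pi : ℂ) / c) ^ ((1 : ℂ) / 2) with hs_def
  -- pointwise identity
  have hpoint : ∀ q : ℝ, complexHermiteFun E θ n q * complexHermiteFun E θ m q
      = ((w / ((2 : ℂ) ^ n * (Nat.factorial n : ℂ) * (Real.sqrt (2 * Real.pi) : ℂ))) ^ ((1:ℂ)/2) *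
         (w / ((2 : ℂ) ^ m * (Nat.factorial m : ℂ) * (Real.sqrt (2 * Real.pi) : ℂ))) ^ ((1:ℂ)/2)) *
        ((hPoly n).eval (a * q) * (hPoly m).eval (a * q) * Complex.exp (-c * (q : ℂ) ^ 2)) := by
    intro q
    have hexp : Complex.exp (-ε * (q : ℂ) ^ 2 / 4) * Complex.exp (-ε * (q : ℂ) ^ 2 / 4)
        = Complex.exp (-c * (q : ℂ) ^ 2) := by
      rw [← Complex.exp_add, hc_def]
      congr 1
      ring
    simp only [complexHermiteFun, hermiteH_eq, ← hε, ← ha_def, ← hw_def]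
    rw [← hexp]
    ring
  simp only [hpoint]
  rw [integral_const_mul, J_eq hc ha n m]
  by_cases h : n = m
  · subst h
    rw [if_pos rfl, if_pos rfl]
    -- nonzeroness
    have h2n : ((2 : ℂ) ^ n) ≠ 0 := pow_ne_zero _ two_ne_zero
    have hfac : ((Nat.factorial n : ℂ)) ≠ 0 := Nat.cast_ne_zero.2 (Nat.factorial_pos n).ne'
    have hsq2π : (Real.sqrt (2 * Real.pi) : ℂ) ≠ 0 :=
      Complex.ofReal_ne_zero.2 (Real.sqrt_ne_zero'.2 (by positivity))
    have hD0 : ((2 : ℂ) ^ n * (Nat.factorial n : ℂ) * (Real.sqrt (2 * Real.pi) : ℂ)) ≠ 0 :=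
      mul_ne_zero (mul_ne_zero h2n hfac) hsq2π
    have hx0 : w / ((2 : ℂ) ^ n * (Nat.factorial n : ℂ) * (Real.sqrt (2 * Real.pi) : ℂ)) ≠ 0 :=
      div_ne_zero hw0 hD0
    have hAA : (w / ((2 : ℂ) ^ n * (Nat.factorial n : ℂ) * (Real.sqrt (2 * Real.pi) : ℂ))) ^ ((1:ℂ)/2) *
        (w / ((2 : ℂ) ^ n * (Nat.factorial n : ℂ) * (Real.sqrt (2 * Real.pi) : ℂ))) ^ ((1:ℂ)/2)
        = w / ((2 : ℂ) ^ n * (Nat.factorial n : ℂ) * (Real.sqrt (2 * Real.pi) : ℂ)) := by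
      rw [← Complex.cpow_add _ _ hx0, show (1:ℂ)/2 + 1/2 = 1 by norm_num, Complex.cpow_one]
    rw [hAA]
    -- key: w * s = √(2π)
    have hwpolar : w = (Real.sqrt E : ℂ) * Complex.exp (((θ/2 : ℝ) : ℂ) * I) := by
      rw [hw_def, hεpolar]
      exact cpow_half_polar hE hθπ
    have hπc : (Real.pi : ℂ) / c = ((2 * Real.pi / E : ℝ) : ℂ) * Complex.exp (((-θ : ℝ) : ℂ) * I) := by
      rw [div_eq_iff hc0, hc_def, hεpolar]
      push_cast
      have hee : Complex.exp ((-θ : ℂ) * I) * Complex.exp ((θ : ℂ) * I) = 1 := by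
        rw [← Complex.exp_add, show (-θ : ℂ) * I + (θ:ℂ) * I = 0 by ring, Complex.exp_zero]
      have hE0 : (E : ℂ) ≠ 0 := Complex.ofReal_ne_zero.2 hE.ne'
      field_simp
      have hee' : cexp (-(↑θ * Complex.I)) * cexp (↑θ * Complex.I) = 1 := by
        rw [← Complex.exp_add]; norm_num
      linear_combination (-1 : ℂ) * hee'
    have hspolar : s = (Real.sqrt (2 * Real.pi / E) : ℂ) * Complex.exp ((((-θ)/2 : ℝ) : ℂ) * I) := by
      rw [hs_def, hπc]
      exact cpow_half_polar (by positivity) (by rwa [abs_neg])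
    have hws : w * s = (Real.sqrt (2 * Real.pi) : ℂ) := by
      rw [hwpolar, hspolar, mul_mul_mul_comm, ← Complex.exp_add,
        show ((θ/2 : ℝ) : ℂ) * I + (((-θ)/2 : ℝ) : ℂ) * I = 0 by push_cast; ring,
        Complex.exp_zero, mul_one, ← Complex.ofReal_mul, ← Real.sqrt_mul hE.le]
      congr 2
      field_simp
    rw [div_mul_eq_mul_div, div_eq_one_iff_eq hD0]
    calc w * ((2 ^ n * (Nat.factorial n) : ℂ) * s)
        = (w * s) * ((2:ℂ) ^ n * (Nat.factorial n : ℂ)) := by push_cast; ring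
      _ = (2:ℂ) ^ n * (Nat.factorial n : ℂ) * (Real.sqrt (2 * Real.pi) : ℂ) := by
          rw [hws]; ring
  · rw [if_neg h, if_neg h, mul_zero]
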